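/- Let 𝐫 = ((r_1,s_1),…,(r_v,s_v)) and 𝐭 = ((t_1,u_1),…,(t_w,u_w)) be vectors of pairs of integers with all s_i, u_j ≠ 0. Then for every positive integer b, every integer k, and every real number x, one has Δ_b^{𝐫,𝐭}(x + k) = Δ_b^{𝐫,𝐭}(x) + k·Δ_b^{𝐫,𝐭}(1). -/

import Mathlib

open Polynomial
open scoped Classical

noncomputable section

/-- The generalized Dwork map `D_b(α)`: the unique rational whose reduced denominator is
coprime to `b` and such that `b·D_b(α) − α ∈ {0, 1, …, b−1}`. -/
def dwork (b : ℕ) (α : ℚ) : ℚ :=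
  if h : ∃ θ : ℚ, Nat.Coprime θ.den b ∧ ∃ k : ℤ, 0 ≤ k ∧ k < (b : ℤ) ∧ (b : ℚ) * θ - α = (k : ℚ)
  then h.choose else 0

/-- `α ∈ ℤ_{≤0}`. -/
def IsNonPosInt (α : ℚ) : Prop := ∃ m : ℤ, m ≤ 0 ∧ α = (m : ℚ)

/-- `α ∈ ℤ_{>0}`. -/
def IsPosInt (α : ℚ) : Prop := ∃ m : ℤ, 0 < m ∧ α = (m : ℚ)

/-- `𝔫_α`. -/
def frakn (α : ℚ) : ℤ := if 0 ≤ α then α.num else |α.num| + 1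

/-- `⟨x⟩`: the fractional part of `x` if `x ∉ ℤ`, and `1` if `x ∈ ℤ`. -/
def cangle (x : ℝ) : ℝ := if ∃ m : ℤ, x = (m : ℝ) then 1 else Int.fract x

/-- Christol order `x ⪯ y`. -/
def cle (x y : ℝ) : Prop := cangle x < cangle y ∨ (cangle x = cangle y ∧ y ≤ x)

/-- The step function `δ_b(r, s, ·)`. -/
def qdelta (b : ℕ) (r s : ℤ) (x : ℝ) : ℤ :=
  if Int.gcd (s / (Nat.gcd (Int.gcd r s) b : ℤ)) (((b / Nat.gcd (Int.gcd r s) b : ℕ)) : ℤ) = 1 then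
    ⌊(Nat.gcd (Int.gcd r s) b : ℝ) * x
        - ((dwork (b / Nat.gcd (Int.gcd r s) b) ((r : ℚ) / (s : ℚ)) : ℚ) : ℝ)
        - ((⌊1 - (r : ℚ) / (s : ℚ)⌋ : ℤ) : ℝ) / ((b / Nat.gcd (Int.gcd r s) b : ℕ) : ℝ)⌋ + 1
  else 0

/-- The Landau-type step function `Δ_b^{𝐫,𝐭}`. -/
def qDeltaFn {v w : ℕ} (b : ℕ) (rr : Fin v → ℤ × ℤ) (tt : Fin w → ℤ × ℤ) (x : ℝ) : ℤ :=
  (∑ i, qdelta b (rr i).1 (rr i).2 x) - (∑ j, qdelta b (tt j).1 (tt j).2 x)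

/-- The q-Pochhammer symbol `(q^r; q^s)_n` for `n ∈ ℕ`, inside `ℚ(q)`. -/
def qPoch (r s : ℤ) (n : ℕ) : RatFunc ℚ :=
  ∏ i ∈ Finset.range n, (1 - RatFunc.X ^ (r + s * (i : ℤ)))

/-- The q-Pochhammer symbol `(q^r; q^s)_n` for `n ∈ ℤ`. -/
def qPochZ (r s : ℤ) (n : ℤ) : RatFunc ℚ :=
  if 0 ≤ n then qPoch r s n.toNat else (qPoch (r - s) (-s) (-n).toNat)⁻¹

/-- Multiplicity of `p` in `g`: the largest `k` with `p^k ∣ g`. -/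
def polyMult (p g : Polynomial ℚ) : ℕ := sSup {k : ℕ | p ^ k ∣ g}

/-- The valuation `v_{φ_b}` on `ℚ(q)` attached to the `b`-th cyclotomic polynomial. -/
def cycVal (b : ℕ) (f : RatFunc ℚ) : ℤ :=
  (polyMult (cyclotomic b ℚ) f.num : ℤ) - (polyMult (cyclotomic b ℚ) f.denom : ℤ)

/-- The image of an integer polynomial in `ℚ(q)`. -/
def polyZ (g : Polynomial ℤ) : RatFunc ℚ :=
  algebraMap (Polynomial ℚ) (RatFunc ℚ) (g.map (Int.castRingHom ℚ))

/-- `f ∈ ℤ[q⁻¹, q]`. -/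
def IsIntLaurent (f : RatFunc ℚ) : Prop :=
  ∃ (m : ℕ) (g : Polynomial ℤ), f * RatFunc.X ^ m = polyZ g

/-- `f ∈ ℤ[q]`. -/
def IsIntPoly (f : RatFunc ℚ) : Prop := ∃ g : Polynomial ℤ, f = polyZ g

/-- The ratio attached to a pair of integers. -/
def ratOf (p : ℤ × ℤ) : ℚ := (p.1 : ℚ) / (p.2 : ℚ)

/-- The q-hypergeometric term `Q_{𝐫,𝐭}(q; n)`, `n ∈ ℕ`. -/
def qHyp {v w : ℕ} (rr : Fin v → ℤ × ℤ) (tt : Fin w → ℤ × ℤ) (n : ℕ) : RatFunc ℚ :=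
  (∏ i, qPoch (rr i).1 (rr i).2 n) / (∏ j, qPoch (tt j).1 (tt j).2 n)

/-- The q-hypergeometric term `Q_{𝐫,𝐭}(q; n)`, `n ∈ ℤ`. -/
def qHypZ {v w : ℕ} (rr : Fin v → ℤ × ℤ) (tt : Fin w → ℤ × ℤ) (n : ℤ) : RatFunc ℚ :=
  (∏ i, qPochZ (rr i).1 (rr i).2 n) / (∏ j, qPochZ (tt j).1 (tt j).2 n)

/-- `c := gcd(r, s, b)`. -/
def cOf (p : ℤ × ℤ) (b : ℕ) : ℕ := Nat.gcd (Int.gcd p.1 p.2) b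

/-- Membership in `V_b` (resp. `W_b`): `gcd(s, b) = gcd(r, s, b)`. -/
def inV (p : ℤ × ℤ) (b : ℕ) : Prop := Nat.gcd p.2.natAbs b = cOf p b

/-- `d_{𝐫,𝐭}`: the lcm of all the `s_i` and `u_j`. -/
def dRT {v w : ℕ} (rr : Fin v → ℤ × ℤ) (tt : Fin w → ℤ × ℤ) : ℕ :=
  Nat.lcm (Finset.univ.lcm fun i => ((rr i).2).natAbs)
    (Finset.univ.lcm fun j => ((tt j).2).natAbs)

/-- `b̃`: the greatest divisor of `b` coprime to `d`. -/
def btilde (d b : ℕ) : ℕ := Nat.findGreatest (fun k => k ∣ b ∧ Nat.Coprime k d) b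

/-- The unique `a ∈ {1,…,d}` with `a·b̃ ≡ 1 (mod d)`. -/
def aOf (d b : ℕ) : ℕ :=
  if h : ∃ a, 1 ≤ a ∧ a ≤ d ∧ (a * btilde d b) % d = 1 % d then h.choose else 1

/-- The representative of `b` modulo `d` lying in `{1,…,d}`. -/
def repMod (d b : ℕ) : ℕ := if b % d = 0 then d else b % d

/-- The jump abscissa `(⟨e·α⟩ + k)/c − ⌊1 − a·α⌋`. -/
def jumpPt (p : ℤ × ℤ) (b : ℕ) (a ei : ℤ) (k : ℕ) : ℝ :=
  (cangle (((ei : ℚ) * ratOf p : ℚ) : ℝ) + (k : ℝ)) / (cOf p b : ℝ)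
    - ((⌊1 - (a : ℚ) * ratOf p⌋ : ℤ) : ℝ)

/-- Number of pairs `(i,k)` with jump abscissa `⪯ x` coming from one pair `p`. -/
def XiCount (p : ℤ × ℤ) (b : ℕ) (a ei : ℤ) (x : ℝ) : ℕ :=
  if inV p b then ((Finset.range (cOf p b)).filter fun k => cle (jumpPt p b a ei k) x).card else 0

/-- The generalized Christol step function `Ξ_{𝐫,𝐭}(b, ·)`, relative to choices `e`, `f`. -/
def Xi {v w : ℕ} (rr : Fin v → ℤ × ℤ) (tt : Fin w → ℤ × ℤ) (b : ℕ)
    (e : Fin v → ℤ) (f : Fin w → ℤ) (x : ℝ) : ℤ :=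
  (∑ i, (XiCount (rr i) b ((aOf (dRT rr tt) b : ℕ) : ℤ) (e i) x : ℤ))
    - (∑ j, (XiCount (tt j) b ((aOf (dRT rr tt) b : ℕ) : ℤ) (f j) x : ℤ))

/-- `ei` is an admissible choice for the pair `p` and `b`: positive with `b·ei ≡ c (mod s)`. -/
def goodChoice (p : ℤ × ℤ) (b : ℕ) (ei : ℤ) : Prop :=
  inV p b → 0 < ei ∧ p.2 ∣ ((b : ℤ) * ei - (cOf p b : ℤ))

end


section Aux

theorem dwork_exists (b : ℕ) (hb : 0 < b) (α : ℚ) (h : Nat.Coprime α.den b) :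
    ∃ θ : ℚ, Nat.Coprime θ.den b ∧ ∃ k : ℤ, 0 ≤ k ∧ k < (b : ℤ) ∧ (b : ℚ) * θ - α = (k : ℚ) := by
  haveI : NeZero b := ⟨hb.ne'⟩
  set u : ZMod b := (-α.num) * (α.den : ZMod b)⁻¹ with hu
  set j : ℤ := (u.val : ℤ) with hj
  have hdvd : (b : ℤ) ∣ α.num + j * α.den := by
    have hunit : IsUnit ((α.den : ℕ) : ZMod b) := (ZMod.isUnit_iff_coprime _ _).2 h
    have h1 : ((α.den : ZMod b))⁻¹ * (α.den : ZMod b) = 1 := ZMod.inv_mul_of_unit _ hunit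
    have : ((α.num + j * α.den : ℤ) : ZMod b) = 0 := by
      push_cast [hj, ZMod.natCast_val, ZMod.cast_id, hu]
      linear_combination (-(α.num : ZMod b)) * h1
    exact (ZMod.intCast_zmod_eq_zero_iff_dvd _ _).1 this
  obtain ⟨m, hm⟩ := hdvd
  refine ⟨(m : ℚ) / (α.den : ℚ), ?_, j, Int.ofNat_nonneg _, ?_, ?_⟩
  · have hd : (((m : ℚ) / ((α.den : ℤ) : ℚ)).den : ℤ) ∣ (α.den : ℤ) := by
      rw [← Rat.divInt_eq_div]; exact Rat.den_dvd m α.den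
    exact Nat.Coprime.coprime_dvd_left (Int.ofNat_dvd.mp (by exact_mod_cast hd)) h
  · rw [hj]; exact_mod_cast ZMod.val_lt u
  · have hden : ((α.den : ℚ)) ≠ 0 := by exact_mod_cast α.den_ne_zero
    have hnd : (α.num : ℚ) = α * (α.den : ℚ) := by
      exact (Rat.mul_den_eq_num α).symm
    have key : (b : ℚ) * m = (α.num : ℚ) + (j : ℚ) * (α.den : ℚ) := by exact_mod_cast hm.symm
    field_simp
    linear_combination key + hnd

theorem dwork_bounds (b : ℕ) (hb : 0 < b) (α : ℚ) (h : Nat.Coprime α.den b) :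
    0 < dwork b α + (⌊1 - α⌋ : ℚ) / b ∧ dwork b α + (⌊1 - α⌋ : ℚ) / b ≤ 1 := by
  have hex := dwork_exists b hb α h
  rw [dwork, dif_pos hex]
  obtain ⟨hden, k, hk0, hkb, hkeq⟩ := hex.choose_spec
  set θ := hex.choose with hθdef
  have hbQ : (0:ℚ) < b := by exact_mod_cast hb
  have hθ : θ = (α + k) / b := by rw [eq_div_iff hbQ.ne']; linear_combination hkeq
  have hf1 : (⌊1 - α⌋ : ℚ) ≤ 1 - α := Int.floor_le _
  have hf2 : 1 - α < (⌊1 - α⌋ : ℚ) + 1 := Int.lt_floor_add_one _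
  have hkb' : (k:ℚ) + 1 ≤ b := by exact_mod_cast hkb
  have hk0' : (0:ℚ) ≤ k := by exact_mod_cast hk0
  rw [hθ, ← add_div]
  constructor
  · exact div_pos (by linarith) hbQ
  · exact (div_le_one hbQ).2 (by linarith)

theorem qdelta_add_int (b : ℕ) (hb : 0 < b) (r s : ℤ) (hs : s ≠ 0) (k : ℤ) (x : ℝ) :
    qdelta b r s (x + (k : ℝ)) = qdelta b r s x + k * qdelta b r s 1 := by
  set c : ℕ := Nat.gcd (Int.gcd r s) b with hc
  set b' : ℕ := b / c with hb'
  by_cases h : Int.gcd (s / (c : ℤ)) ((b' : ℕ) : ℤ) = 1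
  · have hcb : c ∣ b := Nat.gcd_dvd_right _ _
    have hc0 : 0 < c := Nat.gcd_pos_of_pos_right _ hb
    have hb'0 : 0 < b' := Nat.div_pos (Nat.le_of_dvd hb hcb) hc0
    set α : ℚ := (r : ℚ) / (s : ℚ) with hα
    -- coprimality of α.den with b'
    have hcr : (c : ℤ) ∣ r := dvd_trans (Int.ofNat_dvd_right.mpr (Nat.gcd_dvd_left _ _)) (Int.gcd_dvd_left r s)
    have hcs : (c : ℤ) ∣ s := dvd_trans (Int.ofNat_dvd_right.mpr (Nat.gcd_dvd_left _ _)) (Int.gcd_dvd_right r s)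
    have hαeq : α = ((r / (c:ℤ) : ℤ) : ℚ) / ((s / (c:ℤ) : ℤ) : ℚ) := by
      obtain ⟨r', hr'⟩ := hcr
      obtain ⟨s', hs'⟩ := hcs
      have hcZ : (c:ℤ) ≠ 0 := by exact_mod_cast hc0.ne'
      have hcQ : ((c:ℕ):ℚ) ≠ 0 := by exact_mod_cast hc0.ne' 
      rw [hα, hr', hs', Int.mul_ediv_cancel_left _ hcZ, Int.mul_ediv_cancel_left _ hcZ]
      push_cast
      rw [mul_div_mul_left _ _ hcQ]
    have hdvd : (α.den : ℤ) ∣ (s / (c:ℤ)) := by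
      rw [hαeq, ← Rat.divInt_eq_div]; exact Rat.den_dvd _ _
    have hcop : Nat.Coprime α.den b' := by
      have h2 : Nat.Coprime (s / (c:ℤ)).natAbs b' := by
        have h3 := h
        rwa [Int.gcd, Int.natAbs_natCast] at h3
      exact Nat.Coprime.coprime_dvd_left (Int.natAbs_dvd_natAbs.mpr hdvd) h2
    obtain ⟨hC0, hC1⟩ := dwork_bounds b' hb'0 α hcop
    set D : ℚ := dwork b' α with hD
    set F : ℤ := ⌊1 - α⌋ with hF
    have hb'R : (0:ℝ) < (b' : ℝ) := by exact_mod_cast hb'0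
    have hC0' : (0:ℝ) < (D:ℝ) + (F:ℝ) / (b':ℝ) := by exact_mod_cast hC0
    have hC1' : (D:ℝ) + (F:ℝ) / (b':ℝ) ≤ 1 := by exact_mod_cast hC1
    have hfl : ⌊(c : ℝ) * 1 - (D : ℝ) - (F : ℝ) / (b' : ℝ)⌋ = (c : ℤ) - 1 := by
      rw [Int.floor_eq_iff]
      constructor
      · push_cast; linarith
      · push_cast; linarith
    have hsplit : (c:ℝ) * (x + (k:ℝ)) - (D:ℝ) - (F:ℝ)/(b':ℝ)
        = ((c:ℝ) * x - (D:ℝ) - (F:ℝ)/(b':ℝ)) + ((c * k : ℤ) : ℝ) := by push_cast; ring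
    simp only [qdelta, ← hc, ← hb', if_pos h]
    rw [hsplit, Int.floor_add_intCast, hfl]
    push_cast
    ring
  · simp only [qdelta]
    rw [if_neg h, if_neg h, if_neg h]
    ring

end Aux

/-- Lemma 4.4, first part: `Δ_b(x + k) = Δ_b(x) + k·Δ_b(1)`. -/
theorem qDeltaFn_add_int {v w : ℕ} (rr : Fin v → ℤ × ℤ) (tt : Fin w → ℤ × ℤ)
    (hs : ∀ i, (rr i).2 ≠ 0) (hu : ∀ j, (tt j).2 ≠ 0)
    (b : ℕ) (hb : 0 < b) (k : ℤ) (x : ℝ) :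
    qDeltaFn b rr tt (x + (k : ℝ)) = qDeltaFn b rr tt x + k * qDeltaFn b rr tt 1 := by
  simp only [qDeltaFn]
  have h1 : ∀ i, qdelta b (rr i).1 (rr i).2 (x + (k:ℝ)) =
      qdelta b (rr i).1 (rr i).2 x + k * qdelta b (rr i).1 (rr i).2 1 :=
    fun i => qdelta_add_int b hb _ _ (hs i) k x
  have h2 : ∀ j, qdelta b (tt j).1 (tt j).2 (x + (k:ℝ)) =
      qdelta b (tt j).1 (tt j).2 x + k * qdelta b (tt j).1 (tt j).2 1 :=
    fun j => qdelta_add_int b hb _ _ (hu j) k x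
  simp only [h1, h2, Finset.sum_add_distrib, ← Finset.mul_sum]
  ring
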